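/- (Theorem 2, randomization at level 1) Let π ∈ (0,1) be such that πL is an integer, and let z ∈ {0,1}^{MKL} (coordinates indexed by triples (j,k,l)) be such that for every pair (j,k) exactly (1−π)L of the coordinates z_{jk1},…,z_{jkL} equal 1. Let ρc, ρt be nonzero real numbers, let P be the MKL×MKL diagonal matrix whose (j,k,l) diagonal entry is 1/ρc if z_{jkl} = 0 and 1/ρt if z_{jkl} = 1, and let X be the MKL×2 matrix with first column 1_{MKL} and second column z. Assume λ1, λ2, λ3, λ4 > 0 and define Σ1 = Xᵀ P R^{−1} P X. Then Σ1 is invertible and the lower-right entry of Σ1^{−1} equals (λ1/(MKL)) · (ρc²/π + ρt²/(1−π)) + (λ4 − λ1)(ρc − ρt)²/(MKL). -/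

import Mathlib

open Matrix Polynomial Finset

noncomputable section

/-- Extended nested exchangeable correlation matrix: the ((j,k,l),(j',k',l')) entry equals
1 if (j,k,l)=(j',k',l'), `a0` if j=j', k=k', l≠l', `a1` if j=j', k≠k', and `a2` if j≠j'. -/
def Rmat (M K L : ℕ) (a0 a1 a2 : ℝ) :
    Matrix (Fin M × Fin K × Fin L) (Fin M × Fin K × Fin L) ℝ :=
  Matrix.of fun p q =>
    if p = q then 1
    else if p.1 = q.1 ∧ p.2.1 = q.2.1 then a0
    else if p.1 = q.1 then a1
    else a2

def lam1 (a0 : ℝ) : ℝ := 1 - a0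

def lam2 (L : ℕ) (a0 a1 : ℝ) : ℝ := 1 + ((L : ℝ) - 1) * a0 - (L : ℝ) * a1

def lam3 (K L : ℕ) (a0 a1 a2 : ℝ) : ℝ :=
  1 + ((L : ℝ) - 1) * a0 + (L : ℝ) * ((K : ℝ) - 1) * a1 - (L : ℝ) * (K : ℝ) * a2

def lam4 (M K L : ℕ) (a0 a1 a2 : ℝ) : ℝ :=
  1 + ((L : ℝ) - 1) * a0 + (L : ℝ) * ((K : ℝ) - 1) * a1
    + (L : ℝ) * (K : ℝ) * ((M : ℝ) - 1) * a2

namespace MBV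
variable {M K L : ℕ}

abbrev Idx (M K L : ℕ) := Fin M × Fin K × Fin L

lemma H3 (h : Idx M K L → ℝ) :
    (∑ q, h q) = ∑ j, ∑ k, ∑ l, h (j, k, l) := by
  rw [Fintype.sum_prod_type]
  exact Finset.sum_congr rfl fun j _ => Fintype.sum_prod_type _

lemma H1 (h : Idx M K L → ℝ) (p : Idx M K L) :
    (∑ q, if p.1 = q.1 ∧ p.2.1 = q.2.1 then h q else 0) = ∑ l, h (p.1, p.2.1, l) := by
  rw [H3 (fun q => if p.1 = q.1 ∧ p.2.1 = q.2.1 then h q else 0)]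
  show (∑ j, ∑ k, ∑ l, if p.1 = j ∧ p.2.1 = k then h (j, k, l) else 0) = _
  simp only [ite_and, Finset.sum_ite_irrel, Finset.sum_const_zero, Finset.sum_ite_eq,
    Finset.mem_univ, if_true]

lemma H2 (h : Idx M K L → ℝ) (p : Idx M K L) :
    (∑ q, if p.1 = q.1 then h q else 0) = ∑ k, ∑ l, h (p.1, k, l) := by
  rw [H3 (fun q => if p.1 = q.1 then h q else 0)]
  show (∑ j, ∑ k, ∑ l, if p.1 = j then h (j, k, l) else 0) = _
  simp only [Finset.sum_ite_irrel, Finset.sum_const_zero, Finset.sum_ite_eq,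
    Finset.mem_univ, if_true]

def QL : Matrix (Idx M K L) (Idx M K L) ℝ :=
  Matrix.of fun p q => if p.1 = q.1 ∧ p.2.1 = q.2.1 then 1 else 0

def QK : Matrix (Idx M K L) (Idx M K L) ℝ :=
  Matrix.of fun p q => if p.1 = q.1 then 1 else 0

def QJ : Matrix (Idx M K L) (Idx M K L) ℝ := Matrix.of fun _ _ => 1

lemma mulQ (A B : Matrix (Idx M K L) (Idx M K L) ℝ) (p r : Idx M K L) :
    (A * B) p r = ∑ q, A p q * B q r := Matrix.mul_apply

-- products
lemma QL_mul (B : Matrix (Idx M K L) (Idx M K L) ℝ) (p r : Idx M K L) :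
    ((QL * B : Matrix (Idx M K L) (Idx M K L) ℝ)) p r = ∑ l, B (p.1, p.2.1, l) r := by
  rw [mulQ]
  have h1 : ∀ q, QL p q * B q r = if p.1 = q.1 ∧ p.2.1 = q.2.1 then B q r else 0 := by
    intro q; by_cases h : p.1 = q.1 ∧ p.2.1 = q.2.1 <;> simp [QL, h]
  rw [Finset.sum_congr rfl fun q _ => h1 q, H1]

lemma QK_mul (B : Matrix (Idx M K L) (Idx M K L) ℝ) (p r : Idx M K L) :
    ((QK * B : Matrix (Idx M K L) (Idx M K L) ℝ)) p r = ∑ k, ∑ l, B (p.1, k, l) r := by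
  rw [mulQ]
  have h1 : ∀ q, QK p q * B q r = if p.1 = q.1 then B q r else 0 := by
    intro q; by_cases h : p.1 = q.1 <;> simp [QK, h]
  rw [Finset.sum_congr rfl fun q _ => h1 q, H2]

lemma QJ_mul (B : Matrix (Idx M K L) (Idx M K L) ℝ) (p r : Idx M K L) :
    ((QJ * B : Matrix (Idx M K L) (Idx M K L) ℝ)) p r = ∑ j, ∑ k, ∑ l, B (j, k, l) r := by
  rw [mulQ]
  have h1 : ∀ q, QJ p q * B q r = B q r := by intro q; simp [QJ]
  rw [Finset.sum_congr rfl fun q _ => h1 q, H3 (fun q => B q r)]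

lemma QL_mul_QL : (QL * QL : Matrix (Idx M K L) (Idx M K L) ℝ) = (L : ℝ) • QL := by
  ext p r
  rw [QL_mul]
  have h1 : ∀ l : Fin L, QL (p.1, p.2.1, l) r = if p.1 = r.1 ∧ p.2.1 = r.2.1 then (1:ℝ) else 0 :=
    fun l => rfl
  simp only [h1, Finset.sum_ite_irrel, Finset.sum_const_zero, Finset.sum_const,
    Finset.card_univ, Fintype.card_fin, nsmul_eq_mul, mul_one, Matrix.smul_apply, QL,
    Matrix.of_apply, smul_eq_mul]
  split_ifs <;> simp

lemma QL_mul_QK : (QL * QK : Matrix (Idx M K L) (Idx M K L) ℝ) = (L : ℝ) • QK := by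
  ext p r
  rw [QL_mul]
  have h1 : ∀ l : Fin L, QK (p.1, p.2.1, l) r = if p.1 = r.1 then (1:ℝ) else 0 := fun l => rfl
  simp only [h1, Finset.sum_ite_irrel, Finset.sum_const_zero, Finset.sum_const,
    Finset.card_univ, Fintype.card_fin, nsmul_eq_mul, mul_one, Matrix.smul_apply, QK,
    Matrix.of_apply, smul_eq_mul]
  split_ifs <;> simp

lemma QL_mul_QJ : (QL * QJ : Matrix (Idx M K L) (Idx M K L) ℝ) = (L : ℝ) • QJ := by
  ext p r
  rw [QL_mul]
  have h1 : ∀ l : Fin L, QJ (p.1, p.2.1, l) r = (1:ℝ) := fun l => rfl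
  simp [h1, QJ]

lemma QK_mul_QL : (QK * QL : Matrix (Idx M K L) (Idx M K L) ℝ) = (L : ℝ) • QK := by
  ext p r
  rw [QK_mul]
  have h1 : ∀ (k : Fin K) (l : Fin L), QL (p.1, k, l) r = if p.1 = r.1 ∧ k = r.2.1 then (1:ℝ) else 0 :=
    fun k l => rfl
  simp only [h1, ite_and, Finset.sum_ite_irrel, Finset.sum_const_zero, Finset.sum_const,
    Finset.card_univ, Fintype.card_fin, nsmul_eq_mul, mul_one, Finset.sum_ite_eq, Finset.sum_ite_eq',
    Finset.mem_univ, if_true, Matrix.smul_apply, QK, Matrix.of_apply, smul_eq_mul]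
  split_ifs <;> simp

lemma QK_mul_QK : (QK * QK : Matrix (Idx M K L) (Idx M K L) ℝ) = ((K : ℝ) * L) • QK := by
  ext p r
  rw [QK_mul]
  have h1 : ∀ (k : Fin K) (l : Fin L), QK (p.1, k, l) r = if p.1 = r.1 then (1:ℝ) else 0 :=
    fun k l => rfl
  simp only [h1, Finset.sum_ite_irrel, Finset.sum_const_zero, Finset.sum_const,
    Finset.card_univ, Fintype.card_fin, nsmul_eq_mul, mul_one, Matrix.smul_apply, QK,
    Matrix.of_apply, smul_eq_mul]
  split_ifs <;> simp <;> ring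

lemma QK_mul_QJ : (QK * QJ : Matrix (Idx M K L) (Idx M K L) ℝ) = ((K : ℝ) * L) • QJ := by
  ext p r
  rw [QK_mul]
  have h1 : ∀ (k : Fin K) (l : Fin L), QJ (p.1, k, l) r = (1:ℝ) := fun k l => rfl
  simp [h1, QJ]

lemma QJ_mul_QL : (QJ * QL : Matrix (Idx M K L) (Idx M K L) ℝ) = (L : ℝ) • QJ := by
  ext p r
  rw [QJ_mul]
  have h1 : ∀ (j : Fin M) (k : Fin K) (l : Fin L),
      QL (j, k, l) r = if j = r.1 ∧ k = r.2.1 then (1:ℝ) else 0 := fun j k l => rfl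
  simp only [h1, ite_and, Finset.sum_ite_irrel, Finset.sum_const_zero, Finset.sum_const,
    Finset.card_univ, Fintype.card_fin, nsmul_eq_mul, mul_one, Finset.sum_ite_eq, Finset.sum_ite_eq',
    Finset.mem_univ, if_true, Matrix.smul_apply, QJ, Matrix.of_apply, smul_eq_mul]


lemma QJ_mul_QK : (QJ * QK : Matrix (Idx M K L) (Idx M K L) ℝ) = ((K : ℝ) * L) • QJ := by
  ext p r
  rw [QJ_mul]
  have h1 : ∀ (j : Fin M) (k : Fin K) (l : Fin L),
      QK (j, k, l) r = if j = r.1 then (1:ℝ) else 0 := fun j k l => rfl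
  simp only [h1, Finset.sum_ite_irrel, Finset.sum_const_zero, Finset.sum_const,
    Finset.card_univ, Fintype.card_fin, nsmul_eq_mul, mul_one, Finset.sum_ite_eq, Finset.sum_ite_eq',
    Finset.mem_univ, if_true, Matrix.smul_apply, QJ, Matrix.of_apply, smul_eq_mul]


lemma QJ_mul_QJ : (QJ * QJ : Matrix (Idx M K L) (Idx M K L) ℝ) = ((M : ℝ) * K * L) • QJ := by
  ext p r
  rw [QJ_mul]
  have h1 : ∀ (j : Fin M) (k : Fin K) (l : Fin L), QJ (j, k, l) r = (1:ℝ) := fun j k l => rfl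
  simp [h1, QJ]
  ring


lemma mul_combo (y0 y1 y2 y3 x0 x1 x2 x3 : ℝ) :
    ((y0 • 1 + y1 • QL + y2 • QK + y3 • QJ : Matrix (Idx M K L) (Idx M K L) ℝ) *
      (x0 • 1 + x1 • QL + x2 • QK + x3 • QJ)) =
    (y0*x0) • (1 : Matrix (Idx M K L) (Idx M K L) ℝ)
      + (y0*x1 + y1*x0 + (L:ℝ)*(y1*x1)) • QL
      + (y0*x2 + y2*x0 + (L:ℝ)*(y1*x2) + (L:ℝ)*(y2*x1) + (K:ℝ)*(L:ℝ)*(y2*x2)) • QK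
      + (y0*x3 + y3*x0 + (L:ℝ)*(y1*x3) + (L:ℝ)*(y3*x1) + (K:ℝ)*(L:ℝ)*(y2*x3)
          + (K:ℝ)*(L:ℝ)*(y3*x2) + (M:ℝ)*(K:ℝ)*(L:ℝ)*(y3*x3)) • QJ := by
  simp only [add_mul, mul_add, smul_mul_assoc, mul_smul_comm, smul_smul, one_mul, mul_one,
    QL_mul_QL, QL_mul_QK, QL_mul_QJ, QK_mul_QL, QK_mul_QK, QK_mul_QJ,
    QJ_mul_QL, QJ_mul_QK, QJ_mul_QJ]
  module

lemma R_decomp (a0 a1 a2 : ℝ) :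
    Rmat M K L a0 a1 a2 = (1 - a0) • (1 : Matrix (Idx M K L) (Idx M K L) ℝ)
      + (a0 - a1) • QL + (a1 - a2) • QK + a2 • QJ := by
  ext p q
  simp only [Rmat, QL, QK, QJ, Matrix.add_apply, Matrix.smul_apply, Matrix.one_apply,
    Matrix.of_apply, smul_eq_mul]
  by_cases h0 : p = q
  · subst h0; simp
  · by_cases hL : p.1 = q.1 ∧ p.2.1 = q.2.1
    · simp [h0, hL, hL.1]
    · by_cases hK : p.1 = q.1
      · have h2 : ¬ p.2.1 = q.2.1 := fun h => hL ⟨hK, h⟩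
        simp [h0, hL, hK, h2]
      · have h3 : ¬(p.1 = q.1 ∧ p.2.1 = q.2.1) := fun h => hK h.1
        simp [h0, h3, hK]

lemma key_tel (u v w c : ℝ) (hu : u ≠ 0) (hv : v ≠ 0) (hw : w ≠ 0) (hrel : v = u + w * c) :
    v * ((v⁻¹ - u⁻¹) / w) + c * u⁻¹ = 0 := by
  have hc : c = (v - u) / w := by rw [hrel]; field_simp; ring
  rw [hc]
  field_simp
  ring

lemma R_inv_eq (a0 a1 a2 : ℝ) (h1 : lam1 a0 ≠ 0) (h2 : lam2 L a0 a1 ≠ 0)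
    (h3 : lam3 K L a0 a1 a2 ≠ 0) (h4 : lam4 M K L a0 a1 a2 ≠ 0)
    (hM : (M:ℝ) ≠ 0) (hK : (K:ℝ) ≠ 0) (hL : (L:ℝ) ≠ 0) :
    (Rmat M K L a0 a1 a2)⁻¹ =
      (lam1 a0)⁻¹ • (1 : Matrix (Idx M K L) (Idx M K L) ℝ)
      + (((lam2 L a0 a1)⁻¹ - (lam1 a0)⁻¹) / L) • QL
      + (((lam3 K L a0 a1 a2)⁻¹ - (lam2 L a0 a1)⁻¹) / ((K:ℝ)*L)) • QK
      + (((lam4 M K L a0 a1 a2)⁻¹ - (lam3 K L a0 a1 a2)⁻¹) / ((M:ℝ)*K*L)) • QJ := by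
  apply Matrix.inv_eq_right_inv
  rw [R_decomp, mul_combo]
  set l1 := lam1 a0 with hl1
  set l2 := lam2 L a0 a1 with hl2
  set l3 := lam3 K L a0 a1 a2 with hl3
  set l4 := lam4 M K L a0 a1 a2 with hl4
  set x1e := (l2⁻¹ - l1⁻¹) / (L:ℝ) with hx1
  set x2e := (l3⁻¹ - l2⁻¹) / ((K:ℝ)*L) with hx2
  set x3e := (l4⁻¹ - l3⁻¹) / ((M:ℝ)*K*L) with hx3
  have rel1 : l1 = 1 - a0 := by rw [hl1, lam1]
  have rel2 : l2 = l1 + (L:ℝ) * (a0 - a1) := by rw [hl2, hl1, lam1, lam2]; ring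
  have rel3 : l3 = l2 + ((K:ℝ)*L) * (a1 - a2) := by rw [hl3, hl2, lam2, lam3]; ring
  have rel4 : l4 = l3 + ((M:ℝ)*K*L) * a2 := by rw [hl4, hl3, lam3, lam4]; ring
  have hKL : (K:ℝ)*L ≠ 0 := mul_ne_zero hK hL
  have hMKL : (M:ℝ)*K*L ≠ 0 := mul_ne_zero (mul_ne_zero hM hK) hL
  have key1 := key_tel l1 l2 (L:ℝ) (a0 - a1) h1 h2 hL rel2
  have key2 := key_tel l2 l3 ((K:ℝ)*L) (a1 - a2) h2 h3 hKL rel3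
  have key3 := key_tel l3 l4 ((M:ℝ)*K*L) a2 h3 h4 hMKL rel4
  have s1 : l1⁻¹ + (L:ℝ) * x1e = l2⁻¹ := by rw [hx1]; field_simp; ring
  have s2 : l1⁻¹ + (L:ℝ) * x1e + (K:ℝ)*L * x2e = l3⁻¹ := by
    rw [hx1, hx2]; field_simp; ring
  have e0 : (1 - a0) * l1⁻¹ = 1 := by rw [← rel1]; field_simp
  have eL : (1 - a0) * x1e + (a0 - a1) * l1⁻¹ + (L:ℝ) * ((a0 - a1) * x1e) = 0 := by
    linear_combination key1 - x1e * rel2 - x1e * rel1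
  have eK : (1 - a0) * x2e + (a1 - a2) * l1⁻¹ + (L:ℝ) * ((a0 - a1) * x2e)
      + (L:ℝ) * ((a1 - a2) * x1e) + (K:ℝ)*(L:ℝ) * ((a1 - a2) * x2e) = 0 := by
    linear_combination key2 - x2e * rel3 - x2e * rel2 - x2e * rel1 + (a1 - a2) * s1
  have eJ : (1 - a0) * x3e + a2 * l1⁻¹ + (L:ℝ) * ((a0 - a1) * x3e)
      + (L:ℝ) * (a2 * x1e) + (K:ℝ)*(L:ℝ) * ((a1 - a2) * x3e)
      + (K:ℝ)*(L:ℝ) * (a2 * x2e) + (M:ℝ)*(K:ℝ)*(L:ℝ) * (a2 * x3e) = 0 := by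
    linear_combination key3 - x3e * rel4 - x3e * rel3 - x3e * rel2 - x3e * rel1 + a2 * s2
  rw [e0, eL, eK, eJ]
  simp

lemma sum_glob (g : Idx M K L → ℝ) (b : ℝ) (hg : ∀ j k, ∑ l, g (j, k, l) = b) :
    ∑ p, g p = (M:ℝ) * K * b := by
  rw [H3 g]
  simp only [hg, Finset.sum_const, Finset.card_univ, Fintype.card_fin, nsmul_eq_mul]
  ring

lemma inner_sum (x0 x1 x2 x3 : ℝ) (g : Idx M K L → ℝ) (b : ℝ)
    (hg : ∀ j k, ∑ l, g (j, k, l) = b) (p : Idx M K L) :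
    (∑ q, (x0 • (1 : Matrix (Idx M K L) (Idx M K L) ℝ) + x1 • QL + x2 • QK + x3 • QJ : Matrix (Idx M K L) (Idx M K L) ℝ) p q * g q)
      = x0 * g p + (x1 + (K:ℝ) * x2 + (M:ℝ) * (K:ℝ) * x3) * b := by
  have h1 : ∀ q, (x0 • (1 : Matrix (Idx M K L) (Idx M K L) ℝ) + x1 • QL + x2 • QK + x3 • QJ : Matrix (Idx M K L) (Idx M K L) ℝ) p q * g q
      = x0 * (if p = q then g q else 0)
        + (x1 * (if p.1 = q.1 ∧ p.2.1 = q.2.1 then g q else 0)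
        + (x2 * (if p.1 = q.1 then g q else 0) + x3 * g q)) := by
    intro q
    simp only [Matrix.add_apply, Matrix.smul_apply, Matrix.one_apply, QL, QK, QJ,
      Matrix.of_apply, smul_eq_mul]
    split_ifs <;> ring
  rw [Finset.sum_congr rfl fun q _ => h1 q]
  rw [Finset.sum_add_distrib, Finset.sum_add_distrib, Finset.sum_add_distrib,
    ← Finset.mul_sum, ← Finset.mul_sum, ← Finset.mul_sum, ← Finset.mul_sum]
  rw [Finset.sum_ite_eq Finset.univ p g, H1 g p, H2 g p, H3 g]
  simp only [hg, Finset.sum_const, Finset.card_univ, Fintype.card_fin, nsmul_eq_mul,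
    Finset.mem_univ, if_true]
  ring

lemma quad_entry {n : Type*} [Fintype n] [DecidableEq n] (X : Matrix (Idx M K L) n ℝ)
    (D : Idx M K L → ℝ) (A : Matrix (Idx M K L) (Idx M K L) ℝ) (i i' : n) :
    (Xᵀ * Matrix.diagonal D * A * Matrix.diagonal D * X) i i'
      = ∑ p, (X p i * D p) * ∑ q, A p q * (D q * X q i') := by
  have hL : Xᵀ * Matrix.diagonal D = Matrix.of (fun i p => X p i * D p) := by
    ext i p; simp [Matrix.mul_diagonal]
  have hR : Matrix.diagonal D * X = Matrix.of (fun p i => D p * X p i) := by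
    ext p i; simp [Matrix.diagonal_mul]
  rw [Matrix.mul_assoc (Xᵀ * Matrix.diagonal D * A), hL, hR]
  rw [Matrix.mul_apply]
  simp only [Matrix.mul_apply, Matrix.of_apply, Finset.sum_mul]
  rw [Finset.sum_comm]
  refine Finset.sum_congr rfl fun p _ => ?_
  rw [Finset.mul_sum]
  refine Finset.sum_congr rfl fun q _ => ?_
  ring

end MBV

set_option maxHeartbeats 3000000 in
/-- Theorem 2, randomization at level 1. -/
theorem model_based_variance_level1 (M K L : ℕ) (hM : 2 ≤ M) (hK : 2 ≤ K) (hL : 2 ≤ L)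
    (a0 a1 a2 : ℝ) (π ρc ρt : ℝ)
    (hπ : π ∈ Set.Ioo (0 : ℝ) 1) (hρc : ρc ≠ 0) (hρt : ρt ≠ 0)
    (z : Fin M × Fin K × Fin L → ℝ) (hz : ∀ p, z p = 0 ∨ z p = 1)
    (hcard : ∀ j k, ((Finset.univ.filter fun l => z (j, k, l) = 1).card : ℝ) =
      (1 - π) * (L : ℝ))
    (h1 : 0 < lam1 a0) (h2 : 0 < lam2 L a0 a1)
    (h3 : 0 < lam3 K L a0 a1 a2) (h4 : 0 < lam4 M K L a0 a1 a2)
    (P : Matrix (Fin M × Fin K × Fin L) (Fin M × Fin K × Fin L) ℝ)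
    (hP : P = Matrix.diagonal fun p => if z p = 0 then 1 / ρc else 1 / ρt)
    (X : Matrix (Fin M × Fin K × Fin L) (Fin 2) ℝ)
    (hX : X = Matrix.of fun p i => if i = 0 then 1 else z p)
    (Sig1 : Matrix (Fin 2) (Fin 2) ℝ)
    (hSig1 : Sig1 = Xᵀ * P * (Rmat M K L a0 a1 a2)⁻¹ * P * X) :
    IsUnit Sig1 ∧
    Sig1⁻¹ 1 1 = lam1 a0 / ((M : ℝ) * (K : ℝ) * (L : ℝ)) *
        (ρc ^ 2 / π + ρt ^ 2 / (1 - π))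
      + (lam4 M K L a0 a1 a2 - lam1 a0) * (ρc - ρt) ^ 2 /
        ((M : ℝ) * (K : ℝ) * (L : ℝ)) := by
  obtain ⟨hπ0, hπ1⟩ := hπ
  have hπ0' : π ≠ 0 := ne_of_gt hπ0
  have hπ1' : (1:ℝ) - π ≠ 0 := by linarith
  have hMR : (M:ℝ) ≠ 0 := Nat.cast_ne_zero.mpr (by omega)
  have hKR : (K:ℝ) ≠ 0 := Nat.cast_ne_zero.mpr (by omega)
  have hLR : (L:ℝ) ≠ 0 := Nat.cast_ne_zero.mpr (by omega)
  have hl1 : lam1 a0 ≠ 0 := ne_of_gt h1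
  have hl4 : lam4 M K L a0 a1 a2 ≠ 0 := ne_of_gt h4
  set D : (Fin M × Fin K × Fin L) → ℝ := fun p => if z p = 0 then 1 / ρc else 1 / ρt with hDdef
  have hzb : ∀ (j : Fin M) (k : Fin K), ∑ l, z (j, k, l) = (1-π)*(L:ℝ) := by
    intro j k
    have h := hcard j k
    rw [Finset.card_filter] at h
    push_cast at h
    rw [← h]
    refine Finset.sum_congr rfl fun l _ => ?_
    rcases hz (j, k, l) with h' | h' <;> simp [h']
  have hblock : ∀ (c1 c2 : ℝ) (j : Fin M) (k : Fin K),
      ∑ l, ((1 - z (j, k, l)) * c1 + z (j, k, l) * c2) = π*(L:ℝ)*c1 + (1-π)*(L:ℝ)*c2 := by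
    intro c1 c2 j k
    rw [Finset.sum_add_distrib, ← Finset.sum_mul, ← Finset.sum_mul, Finset.sum_sub_distrib,
      Finset.sum_const, hzb j k]
    simp only [Finset.card_univ, Fintype.card_fin, nsmul_eq_mul, mul_one]
    ring
  have pD : ∀ p, D p = (1 - z p) * (1/ρc) + z p * (1/ρt) := by
    intro p; rcases hz p with h' | h' <;> simp [hDdef, h'] <;> ring
  have pDD : ∀ p, D p * D p = (1 - z p) * (1/ρc^2) + z p * (1/ρt^2) := by
    intro p; rcases hz p with h' | h' <;> simp [hDdef, h'] <;> ring
  have pDz : ∀ p, D p * z p = (1 - z p) * 0 + z p * (1/ρt) := by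
    intro p; rcases hz p with h' | h' <;> simp [hDdef, h']
  have pzD : ∀ p, z p * D p = (1 - z p) * 0 + z p * (1/ρt) := by
    intro p; rcases hz p with h' | h' <;> simp [hDdef, h']
  have pzDD : ∀ p, z p * (D p * D p) = (1 - z p) * 0 + z p * (1/ρt^2) := by
    intro p; rcases hz p with h' | h' <;> simp [hDdef, h'] <;> ring
  have pzzDD : ∀ p, (z p * z p) * (D p * D p) = (1 - z p) * 0 + z p * (1/ρt^2) := by
    intro p; rcases hz p with h' | h' <;> simp [hDdef, h'] <;> ring
  have bD : ∀ (j : Fin M) (k : Fin K), ∑ l, D (j, k, l) = (π*(L:ℝ)*(1/ρc) + (1-π)*(L:ℝ)*(1/ρt)) := by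
    intro j k; simp only [pD]; exact hblock _ _ j k
  have bDz : ∀ (j : Fin M) (k : Fin K), ∑ l, D (j, k, l) * z (j, k, l) = (π*(L:ℝ)*0 + (1-π)*(L:ℝ)*(1/ρt)) := by
    intro j k; simp only [pDz]; exact hblock _ _ j k
  have G1 : ∑ p, D p * D p = (M:ℝ)*(K:ℝ)*(π*(L:ℝ)*(1/ρc^2) + (1-π)*(L:ℝ)*(1/ρt^2)) :=
    MBV.sum_glob _ _ (fun j k => by simp only [pDD]; exact hblock _ _ j k)
  have G2 : ∑ p, z p * (D p * D p) = (M:ℝ)*(K:ℝ)*(π*(L:ℝ)*0 + (1-π)*(L:ℝ)*(1/ρt^2)) :=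
    MBV.sum_glob _ _ (fun j k => by simp only [pzDD]; exact hblock _ _ j k)
  have G3 : ∑ p, (z p * z p) * (D p * D p) = (M:ℝ)*(K:ℝ)*(π*(L:ℝ)*0 + (1-π)*(L:ℝ)*(1/ρt^2)) :=
    MBV.sum_glob _ _ (fun j k => by simp only [pzzDD]; exact hblock _ _ j k)
  have G4 : ∑ p, D p = (M:ℝ)*(K:ℝ)*(π*(L:ℝ)*(1/ρc) + (1-π)*(L:ℝ)*(1/ρt)) :=
    MBV.sum_glob _ _ (fun j k => by simp only [pD]; exact hblock _ _ j k)
  have G5 : ∑ p, z p * D p = (M:ℝ)*(K:ℝ)*(π*(L:ℝ)*0 + (1-π)*(L:ℝ)*(1/ρt)) :=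
    MBV.sum_glob _ _ (fun j k => by simp only [pzD]; exact hblock _ _ j k)
  have hX0 : ∀ p, X p 0 = 1 := by intro p; rw [hX]; simp
  have hX1 : ∀ p, X p 1 = z p := by intro p; rw [hX]; simp
  have hRinv := MBV.R_inv_eq (M := M) (K := K) (L := L) a0 a1 a2 hl1 (ne_of_gt h2)
    (ne_of_gt h3) hl4 hMR hKR hLR
  have hγ : ((((lam2 L a0 a1)⁻¹ - (lam1 a0)⁻¹) / (L:ℝ)) + (K:ℝ) * (((lam3 K L a0 a1 a2)⁻¹ - (lam2 L a0 a1)⁻¹) / ((K:ℝ)*(L:ℝ))) + (M:ℝ) * (K:ℝ) * (((lam4 M K L a0 a1 a2)⁻¹ - (lam3 K L a0 a1 a2)⁻¹) / ((M:ℝ)*(K:ℝ)*(L:ℝ)))) = (((lam4 M K L a0 a1 a2)⁻¹ - (lam1 a0)⁻¹) / (L:ℝ)) := by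
    field_simp
    ring

  have hc00 : Sig1 0 0 = (lam1 a0)⁻¹ * ((M:ℝ)*(K:ℝ)*(π*(L:ℝ)*(1/ρc^2) + (1-π)*(L:ℝ)*(1/ρt^2))) + ((((lam4 M K L a0 a1 a2)⁻¹ - (lam1 a0)⁻¹) / (L:ℝ)) * (π*(L:ℝ)*(1/ρc) + (1-π)*(L:ℝ)*(1/ρt))) * ((M:ℝ)*(K:ℝ)*(π*(L:ℝ)*(1/ρc) + (1-π)*(L:ℝ)*(1/ρt))) := by
    rw [hSig1, hP, hRinv, MBV.quad_entry]
    have hb : ∀ (j : Fin M) (k : Fin K), ∑ l, (D (j, k, l) * X ((j, k, l) : Fin M × Fin K × Fin L) 0) = (π*(L:ℝ)*(1/ρc) + (1-π)*(L:ℝ)*(1/ρt)) := by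
      intro j k; simp only [hX0, mul_one]; exact bD j k
    have hin := fun p => MBV.inner_sum (lam1 a0)⁻¹ (((lam2 L a0 a1)⁻¹ - (lam1 a0)⁻¹) / (L:ℝ)) (((lam3 K L a0 a1 a2)⁻¹ - (lam2 L a0 a1)⁻¹) / ((K:ℝ)*(L:ℝ))) (((lam4 M K L a0 a1 a2)⁻¹ - (lam3 K L a0 a1 a2)⁻¹) / ((M:ℝ)*(K:ℝ)*(L:ℝ))) (fun q => D q * X q 0) (π*(L:ℝ)*(1/ρc) + (1-π)*(L:ℝ)*(1/ρt)) hb p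
    simp only [hin]
    have expand : ∀ p : Fin M × Fin K × Fin L,
        (X p 0 * D p) * ((lam1 a0)⁻¹ * (D p * X p 0) + ((((lam2 L a0 a1)⁻¹ - (lam1 a0)⁻¹) / (L:ℝ)) + (K:ℝ) * (((lam3 K L a0 a1 a2)⁻¹ - (lam2 L a0 a1)⁻¹) / ((K:ℝ)*(L:ℝ))) + (M:ℝ) * (K:ℝ) * (((lam4 M K L a0 a1 a2)⁻¹ - (lam3 K L a0 a1 a2)⁻¹) / ((M:ℝ)*(K:ℝ)*(L:ℝ)))) * (π*(L:ℝ)*(1/ρc) + (1-π)*(L:ℝ)*(1/ρt)))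
          = (lam1 a0)⁻¹ * (D p * D p) + (((((lam2 L a0 a1)⁻¹ - (lam1 a0)⁻¹) / (L:ℝ)) + (K:ℝ) * (((lam3 K L a0 a1 a2)⁻¹ - (lam2 L a0 a1)⁻¹) / ((K:ℝ)*(L:ℝ))) + (M:ℝ) * (K:ℝ) * (((lam4 M K L a0 a1 a2)⁻¹ - (lam3 K L a0 a1 a2)⁻¹) / ((M:ℝ)*(K:ℝ)*(L:ℝ)))) * (π*(L:ℝ)*(1/ρc) + (1-π)*(L:ℝ)*(1/ρt))) * (D p) := by
      intro p; rw [hX0 p]; ring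
    simp only [expand]
    rw [Finset.sum_add_distrib, ← Finset.mul_sum, ← Finset.mul_sum, G1, G4, hγ]

  have hc01 : Sig1 0 1 = (lam1 a0)⁻¹ * ((M:ℝ)*(K:ℝ)*(π*(L:ℝ)*0 + (1-π)*(L:ℝ)*(1/ρt^2))) + ((((lam4 M K L a0 a1 a2)⁻¹ - (lam1 a0)⁻¹) / (L:ℝ)) * (π*(L:ℝ)*0 + (1-π)*(L:ℝ)*(1/ρt))) * ((M:ℝ)*(K:ℝ)*(π*(L:ℝ)*(1/ρc) + (1-π)*(L:ℝ)*(1/ρt))) := by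
    rw [hSig1, hP, hRinv, MBV.quad_entry]
    have hb : ∀ (j : Fin M) (k : Fin K), ∑ l, (D (j, k, l) * X ((j, k, l) : Fin M × Fin K × Fin L) 1) = (π*(L:ℝ)*0 + (1-π)*(L:ℝ)*(1/ρt)) := by
      intro j k; simp only [hX1]; exact bDz j k
    have hin := fun p => MBV.inner_sum (lam1 a0)⁻¹ (((lam2 L a0 a1)⁻¹ - (lam1 a0)⁻¹) / (L:ℝ)) (((lam3 K L a0 a1 a2)⁻¹ - (lam2 L a0 a1)⁻¹) / ((K:ℝ)*(L:ℝ))) (((lam4 M K L a0 a1 a2)⁻¹ - (lam3 K L a0 a1 a2)⁻¹) / ((M:ℝ)*(K:ℝ)*(L:ℝ))) (fun q => D q * X q 1) (π*(L:ℝ)*0 + (1-π)*(L:ℝ)*(1/ρt)) hb p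
    simp only [hin]
    have expand : ∀ p : Fin M × Fin K × Fin L,
        (X p 0 * D p) * ((lam1 a0)⁻¹ * (D p * X p 1) + ((((lam2 L a0 a1)⁻¹ - (lam1 a0)⁻¹) / (L:ℝ)) + (K:ℝ) * (((lam3 K L a0 a1 a2)⁻¹ - (lam2 L a0 a1)⁻¹) / ((K:ℝ)*(L:ℝ))) + (M:ℝ) * (K:ℝ) * (((lam4 M K L a0 a1 a2)⁻¹ - (lam3 K L a0 a1 a2)⁻¹) / ((M:ℝ)*(K:ℝ)*(L:ℝ)))) * (π*(L:ℝ)*0 + (1-π)*(L:ℝ)*(1/ρt)))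
          = (lam1 a0)⁻¹ * (z p * (D p * D p)) + (((((lam2 L a0 a1)⁻¹ - (lam1 a0)⁻¹) / (L:ℝ)) + (K:ℝ) * (((lam3 K L a0 a1 a2)⁻¹ - (lam2 L a0 a1)⁻¹) / ((K:ℝ)*(L:ℝ))) + (M:ℝ) * (K:ℝ) * (((lam4 M K L a0 a1 a2)⁻¹ - (lam3 K L a0 a1 a2)⁻¹) / ((M:ℝ)*(K:ℝ)*(L:ℝ)))) * (π*(L:ℝ)*0 + (1-π)*(L:ℝ)*(1/ρt))) * (D p) := by
      intro p; rw [hX0 p, hX1 p]; ring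
    simp only [expand]
    rw [Finset.sum_add_distrib, ← Finset.mul_sum, ← Finset.mul_sum, G2, G4, hγ]

  have hc10 : Sig1 1 0 = (lam1 a0)⁻¹ * ((M:ℝ)*(K:ℝ)*(π*(L:ℝ)*0 + (1-π)*(L:ℝ)*(1/ρt^2))) + ((((lam4 M K L a0 a1 a2)⁻¹ - (lam1 a0)⁻¹) / (L:ℝ)) * (π*(L:ℝ)*(1/ρc) + (1-π)*(L:ℝ)*(1/ρt))) * ((M:ℝ)*(K:ℝ)*(π*(L:ℝ)*0 + (1-π)*(L:ℝ)*(1/ρt))) := by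
    rw [hSig1, hP, hRinv, MBV.quad_entry]
    have hb : ∀ (j : Fin M) (k : Fin K), ∑ l, (D (j, k, l) * X ((j, k, l) : Fin M × Fin K × Fin L) 0) = (π*(L:ℝ)*(1/ρc) + (1-π)*(L:ℝ)*(1/ρt)) := by
      intro j k; simp only [hX0, mul_one]; exact bD j k
    have hin := fun p => MBV.inner_sum (lam1 a0)⁻¹ (((lam2 L a0 a1)⁻¹ - (lam1 a0)⁻¹) / (L:ℝ)) (((lam3 K L a0 a1 a2)⁻¹ - (lam2 L a0 a1)⁻¹) / ((K:ℝ)*(L:ℝ))) (((lam4 M K L a0 a1 a2)⁻¹ - (lam3 K L a0 a1 a2)⁻¹) / ((M:ℝ)*(K:ℝ)*(L:ℝ))) (fun q => D q * X q 0) (π*(L:ℝ)*(1/ρc) + (1-π)*(L:ℝ)*(1/ρt)) hb p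
    simp only [hin]
    have expand : ∀ p : Fin M × Fin K × Fin L,
        (X p 1 * D p) * ((lam1 a0)⁻¹ * (D p * X p 0) + ((((lam2 L a0 a1)⁻¹ - (lam1 a0)⁻¹) / (L:ℝ)) + (K:ℝ) * (((lam3 K L a0 a1 a2)⁻¹ - (lam2 L a0 a1)⁻¹) / ((K:ℝ)*(L:ℝ))) + (M:ℝ) * (K:ℝ) * (((lam4 M K L a0 a1 a2)⁻¹ - (lam3 K L a0 a1 a2)⁻¹) / ((M:ℝ)*(K:ℝ)*(L:ℝ)))) * (π*(L:ℝ)*(1/ρc) + (1-π)*(L:ℝ)*(1/ρt)))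
          = (lam1 a0)⁻¹ * (z p * (D p * D p)) + (((((lam2 L a0 a1)⁻¹ - (lam1 a0)⁻¹) / (L:ℝ)) + (K:ℝ) * (((lam3 K L a0 a1 a2)⁻¹ - (lam2 L a0 a1)⁻¹) / ((K:ℝ)*(L:ℝ))) + (M:ℝ) * (K:ℝ) * (((lam4 M K L a0 a1 a2)⁻¹ - (lam3 K L a0 a1 a2)⁻¹) / ((M:ℝ)*(K:ℝ)*(L:ℝ)))) * (π*(L:ℝ)*(1/ρc) + (1-π)*(L:ℝ)*(1/ρt))) * (z p * D p) := by
      intro p; rw [hX0 p, hX1 p]; ring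
    simp only [expand]
    rw [Finset.sum_add_distrib, ← Finset.mul_sum, ← Finset.mul_sum, G2, G5, hγ]

  have hc11 : Sig1 1 1 = (lam1 a0)⁻¹ * ((M:ℝ)*(K:ℝ)*(π*(L:ℝ)*0 + (1-π)*(L:ℝ)*(1/ρt^2))) + ((((lam4 M K L a0 a1 a2)⁻¹ - (lam1 a0)⁻¹) / (L:ℝ)) * (π*(L:ℝ)*0 + (1-π)*(L:ℝ)*(1/ρt))) * ((M:ℝ)*(K:ℝ)*(π*(L:ℝ)*0 + (1-π)*(L:ℝ)*(1/ρt))) := by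
    rw [hSig1, hP, hRinv, MBV.quad_entry]
    have hb : ∀ (j : Fin M) (k : Fin K), ∑ l, (D (j, k, l) * X ((j, k, l) : Fin M × Fin K × Fin L) 1) = (π*(L:ℝ)*0 + (1-π)*(L:ℝ)*(1/ρt)) := by
      intro j k; simp only [hX1]; exact bDz j k
    have hin := fun p => MBV.inner_sum (lam1 a0)⁻¹ (((lam2 L a0 a1)⁻¹ - (lam1 a0)⁻¹) / (L:ℝ)) (((lam3 K L a0 a1 a2)⁻¹ - (lam2 L a0 a1)⁻¹) / ((K:ℝ)*(L:ℝ))) (((lam4 M K L a0 a1 a2)⁻¹ - (lam3 K L a0 a1 a2)⁻¹) / ((M:ℝ)*(K:ℝ)*(L:ℝ))) (fun q => D q * X q 1) (π*(L:ℝ)*0 + (1-π)*(L:ℝ)*(1/ρt)) hb p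
    simp only [hin]
    have expand : ∀ p : Fin M × Fin K × Fin L,
        (X p 1 * D p) * ((lam1 a0)⁻¹ * (D p * X p 1) + ((((lam2 L a0 a1)⁻¹ - (lam1 a0)⁻¹) / (L:ℝ)) + (K:ℝ) * (((lam3 K L a0 a1 a2)⁻¹ - (lam2 L a0 a1)⁻¹) / ((K:ℝ)*(L:ℝ))) + (M:ℝ) * (K:ℝ) * (((lam4 M K L a0 a1 a2)⁻¹ - (lam3 K L a0 a1 a2)⁻¹) / ((M:ℝ)*(K:ℝ)*(L:ℝ)))) * (π*(L:ℝ)*0 + (1-π)*(L:ℝ)*(1/ρt)))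
          = (lam1 a0)⁻¹ * ((z p * z p) * (D p * D p)) + (((((lam2 L a0 a1)⁻¹ - (lam1 a0)⁻¹) / (L:ℝ)) + (K:ℝ) * (((lam3 K L a0 a1 a2)⁻¹ - (lam2 L a0 a1)⁻¹) / ((K:ℝ)*(L:ℝ))) + (M:ℝ) * (K:ℝ) * (((lam4 M K L a0 a1 a2)⁻¹ - (lam3 K L a0 a1 a2)⁻¹) / ((M:ℝ)*(K:ℝ)*(L:ℝ)))) * (π*(L:ℝ)*0 + (1-π)*(L:ℝ)*(1/ρt))) * (z p * D p) := by
      intro p; rw [hX1 p]; ring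
    simp only [expand]
    rw [Finset.sum_add_distrib, ← Finset.mul_sum, ← Finset.mul_sum, G3, G5, hγ]

  have h00 : Sig1 0 0 = (M:ℝ)*(K:ℝ)*(L:ℝ) * ((lam1 a0)⁻¹ * (π*(1/ρc)^2 + (1-π)*(1/ρt)^2)
      + ((lam4 M K L a0 a1 a2)⁻¹ - (lam1 a0)⁻¹) * (π*(1/ρc) + (1-π)*(1/ρt))^2) := by
    rw [hc00]; field_simp
  have h01 : Sig1 0 1 = (M:ℝ)*(K:ℝ)*(L:ℝ) * ((lam1 a0)⁻¹ * ((1-π)*(1/ρt)^2)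
      + ((lam4 M K L a0 a1 a2)⁻¹ - (lam1 a0)⁻¹) * ((1-π)*(1/ρt)) * (π*(1/ρc) + (1-π)*(1/ρt))) := by
    rw [hc01]; field_simp; ring
  have h10 : Sig1 1 0 = (M:ℝ)*(K:ℝ)*(L:ℝ) * ((lam1 a0)⁻¹ * ((1-π)*(1/ρt)^2)
      + ((lam4 M K L a0 a1 a2)⁻¹ - (lam1 a0)⁻¹) * ((1-π)*(1/ρt)) * (π*(1/ρc) + (1-π)*(1/ρt))) := by
    rw [hc10]; field_simp; ring
  have h11 : Sig1 1 1 = (M:ℝ)*(K:ℝ)*(L:ℝ) * ((lam1 a0)⁻¹ * ((1-π)*(1/ρt)^2)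
      + ((lam4 M K L a0 a1 a2)⁻¹ - (lam1 a0)⁻¹) * ((1-π)*(1/ρt))^2) := by
    rw [hc11]; field_simp; ring
  have hdet : Sig1.det = ((M:ℝ)*(K:ℝ)*(L:ℝ))^2 * (π*(1-π)) * ((1/ρc)^2*(1/ρt)^2)
      * ((lam1 a0)⁻¹ * (lam4 M K L a0 a1 a2)⁻¹) := by
    rw [Matrix.det_fin_two, h00, h11, h01, h10]; ring
  have hMKL : ((M:ℝ)*(K:ℝ)*(L:ℝ)) ≠ 0 := mul_ne_zero (mul_ne_zero hMR hKR) hLR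
  have hdet0 : Sig1.det ≠ 0 := by
    rw [hdet]
    exact mul_ne_zero (mul_ne_zero (mul_ne_zero (pow_ne_zero 2 hMKL)
      (mul_ne_zero hπ0' hπ1')) (mul_ne_zero (pow_ne_zero 2 (one_div_ne_zero hρc))
      (pow_ne_zero 2 (one_div_ne_zero hρt)))) (mul_ne_zero (inv_ne_zero hl1) (inv_ne_zero hl4))
  refine ⟨(Matrix.isUnit_iff_isUnit_det _).mpr (isUnit_iff_ne_zero.mpr hdet0), ?_⟩
  have hinv11 : Sig1⁻¹ 1 1 = Sig1.det⁻¹ * Sig1 0 0 := by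
    rw [Matrix.inv_def, Matrix.adjugate_fin_two]
    simp [Ring.inverse_eq_inv']
  rw [hinv11, hdet, h00]
  field_simp
  ring
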